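/- Let e : L → C be a canonical extension of a bounded lattice L. Let D^∧ be the collection of subsets of J∞(C) of the form ⋃_{a∈T} â for finite T ⊆ L, and D^∨ the collection of subsets of M∞(C) of the form ⋃_{a∈T} ǎ for finite T ⊆ L. Define u(V) := {y ∈ M∞(C) : ∀x ∈ V, x ≤ y} and l(W) := {x ∈ J∞(C) : ∀y ∈ W, x ≤ y}. Then: (1) for finite T ⊆ L, u(⋃_{a∈T} â) = (⋁T)ˇ, so u maps D^∧ into D^∨, and dually l maps D^∨ into D^∧; (2) for V ∈ D^∧ and W ∈ D^∨, W ⊆ u(V) if and only if V ⊆ l(W) (a Galois connection); (3) the set of Galois-closed elements {V ∈ D^∧ : l(u(V)) = V}, ordered by inclusion, is order-isomorphic to L via a ↦ â. -/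

import Mathlib

/-- A finite subset `M` of a bounded lattice is join-admissible if its join
distributes over all meets with elements of the lattice. -/
def JoinAdmissible {L : Type*} [Lattice L] [BoundedOrder L] (M : Finset L) : Prop :=
  ∀ a : L, a ⊓ M.sup id = M.sup fun m => a ⊓ m

/-- An a-ideal: a downward-closed subset closed under admissible joins. -/
def IsAIdeal {L : Type*} [Lattice L] [BoundedOrder L] (A : Set L) : Prop :=
  (∀ a ∈ A, ∀ b, b ≤ a → b ∈ A) ∧
  ∀ M : Finset L, ↑M ⊆ A → JoinAdmissible M → M.sup id ∈ A

/-- The smallest a-ideal containing `T`. -/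
def aIdealGen {L : Type*} [Lattice L] [BoundedOrder L] (T : Set L) : Set L :=
  ⋂₀ {A : Set L | IsAIdeal A ∧ T ⊆ A}

/-- An element `x` of a complete lattice is completely join-irreducible if
`x ∈ S` whenever `x = ⨆ S`. -/
def CompletelyJoinIrreducible {C : Type*} [CompleteLattice C] (x : C) : Prop :=
  ∀ S : Set C, x = sSup S → x ∈ S

/-- An element `y` of a complete lattice is completely meet-irreducible if
`y ∈ S` whenever `y = ⨅ S`. -/
def CompletelyMeetIrreducible {C : Type*} [CompleteLattice C] (y : C) : Prop :=
  ∀ S : Set C, y = sInf S → y ∈ S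

/-- `e : L → C` is a canonical extension of the bounded lattice `L`: an injective
bounded-lattice homomorphism into a complete lattice `C` which is dense and compact. -/
def IsCanonicalExtension {L C : Type*} [Lattice L] [BoundedOrder L] [CompleteLattice C]
    (e : L → C) : Prop :=
  Function.Injective e ∧
  (∀ a b : L, e (a ⊓ b) = e a ⊓ e b) ∧
  (∀ a b : L, e (a ⊔ b) = e a ⊔ e b) ∧
  e ⊥ = ⊥ ∧ e ⊤ = ⊤ ∧
  -- denseness
  (∀ u : C,
    u = sSup {v : C | ∃ S : Set L, v = sInf (e '' S) ∧ v ≤ u} ∧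
    u = sInf {v : C | ∃ T : Set L, v = sSup (e '' T) ∧ u ≤ v}) ∧
  -- compactness
  (∀ S T : Set L, sInf (e '' S) ≤ sSup (e '' T) →
    ∃ S' T' : Finset L, ↑S' ⊆ S ∧ ↑T' ⊆ T ∧ S'.inf id ≤ T'.sup id)

/-- `â`: the completely join-irreducible elements of `C` below `e a`. -/
def hatSet {L C : Type*} [Lattice L] [BoundedOrder L] [CompleteLattice C]
    (e : L → C) (a : L) : Set C :=
  {x : C | CompletelyJoinIrreducible x ∧ x ≤ e a}

/-- `ǎ`: the completely meet-irreducible elements of `C` above `e a`. -/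
def checkSet {L C : Type*} [Lattice L] [BoundedOrder L] [CompleteLattice C]
    (e : L → C) (a : L) : Set C :=
  {y : C | CompletelyMeetIrreducible y ∧ e a ≤ y}

/-- `u(V) = {y ∈ M∞(C) : ∀ x ∈ V, x ≤ y}`. -/
def uMap {C : Type*} [CompleteLattice C] (V : Set C) : Set C :=
  {y : C | CompletelyMeetIrreducible y ∧ ∀ x ∈ V, x ≤ y}

/-- `l(W) = {x ∈ J∞(C) : ∀ y ∈ W, x ≤ y}`. -/
def lMap {C : Type*} [CompleteLattice C] (W : Set C) : Set C :=
  {x : C | CompletelyJoinIrreducible x ∧ ∀ y ∈ W, x ≤ y}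


section CanonicalExtensionAux

variable {L C : Type*} [Lattice L] [BoundedOrder L] [CompleteLattice C] {e : L → C}

lemma ce_mono (h : IsCanonicalExtension e) {a b : L} (hab : a ≤ b) : e a ≤ e b := by
  have : e a = e a ⊓ e b := by rw [← h.2.1, inf_eq_left.mpr hab]
  rw [this]; exact inf_le_right

lemma ce_le_iff (h : IsCanonicalExtension e) {a b : L} : e a ≤ e b ↔ a ≤ b := by
  refine ⟨fun hab => ?_, ce_mono h⟩
  have : e (a ⊓ b) = e a := by rw [h.2.1, inf_eq_left.mpr hab]
  exact inf_eq_left.mp (h.1 this)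

lemma ce_finsetSup (h : IsCanonicalExtension e) (T : Finset L) :
    e (T.sup id) = T.sup fun a => e a := by
  classical
  induction T using Finset.induction_on with
  | empty => simpa using h.2.2.2.1
  | insert _ _ hx ih => simp [Finset.sup_insert, h.2.2.1, ih]

lemma ce_finsetInf (h : IsCanonicalExtension e) (T : Finset L) :
    e (T.inf id) = T.inf fun a => e a := by
  classical
  induction T using Finset.induction_on with
  | empty => simpa using h.2.2.2.2.1
  | insert _ _ hx ih => simp [Finset.inf_insert, h.2.1, ih]

lemma cji_exists (h : IsCanonicalExtension e) (S : Set L) (w : C)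
    (hw : ¬ sInf (e '' S) ≤ w) :
    ∃ x : C, CompletelyJoinIrreducible x ∧ x ≤ sInf (e '' S) ∧ ¬ x ≤ w := by
  classical
  have hmeet := h.2.1
  have hdense := h.2.2.2.2.2.1
  have hcomp := h.2.2.2.2.2.2
  set p := sInf (e '' S) with hp
  have : ∃ T : Set L, w ≤ sSup (e '' T) ∧ ¬ p ≤ sSup (e '' T) := by
    by_contra hc
    push_neg at hc
    apply hw
    calc p ≤ sInf {v : C | ∃ T : Set L, v = sSup (e '' T) ∧ w ≤ v} := by
          apply le_sInf; rintro v ⟨T, rfl, hwv⟩; exact hc T hwv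
      _ = w := ((hdense w).2).symm
  obtain ⟨T, hwT, hpT⟩ := this
  set v := sSup (e '' T) with hv
  set Tid : Set L := {a | ∃ T₀ : Finset L, ↑T₀ ⊆ T ∧ a ≤ T₀.sup id} with hTid
  set F₀ : Set L := {a | ∃ S₀ : Finset L, ↑S₀ ⊆ S ∧ S₀.inf id ≤ a} with hF₀
  have hTv : ∀ a ∈ Tid, e a ≤ v := by
    rintro a ⟨T₀, hT₀, ha⟩
    calc e a ≤ e (T₀.sup id) := ce_mono h ha
      _ = T₀.sup fun b => e b := ce_finsetSup h T₀
      _ ≤ v := Finset.sup_le fun b hb => le_sSup ⟨b, hT₀ hb, rfl⟩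
  have hpF : ∀ a ∈ F₀, p ≤ e a := by
    rintro a ⟨S₀, hS₀, ha⟩
    calc p ≤ S₀.inf fun b => e b := Finset.le_inf fun b hb => sInf_le ⟨b, hS₀ hb, rfl⟩
      _ = e (S₀.inf id) := (ce_finsetInf h S₀).symm
      _ ≤ e a := ce_mono h ha
  have hF₀fil : (∀ a ∈ F₀, ∀ b, a ≤ b → b ∈ F₀) ∧ (∀ a ∈ F₀, ∀ b ∈ F₀, a ⊓ b ∈ F₀) := by
    constructor
    · rintro a ⟨S₀, hS₀, hle⟩ b hab; exact ⟨S₀, hS₀, hle.trans hab⟩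
    · rintro a ⟨S₀, hS₀, hle⟩ b ⟨S₁, hS₁, hle'⟩
      refine ⟨S₀ ∪ S₁, ?_, ?_⟩
      · rw [Finset.coe_union]; exact Set.union_subset hS₀ hS₁
      · rw [Finset.inf_union]; exact inf_le_inf hle hle'
  have hSF₀ : S ⊆ F₀ := fun a ha => ⟨{a}, by simpa using ha, by simp⟩
  have hF₀Tid : ∀ a ∈ F₀, a ∉ Tid := fun a haF haT => hpT ((hpF a haF).trans (hTv a haT))
  set 𝒢 : Set (Set L) := {G | ((∀ a ∈ G, ∀ b, a ≤ b → b ∈ G) ∧ (∀ a ∈ G, ∀ b ∈ G, a ⊓ b ∈ G))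
    ∧ F₀ ⊆ G ∧ ∀ a ∈ G, a ∉ Tid} with h𝒢
  have hchain : ∀ c ⊆ 𝒢, IsChain (· ⊆ ·) c → c.Nonempty → ∃ ub ∈ 𝒢, ∀ s ∈ c, s ⊆ ub := by
    rintro c hc hch ⟨G₀, hG₀⟩
    refine ⟨⋃₀ c, ⟨⟨?_, ?_⟩, ?_, ?_⟩, fun s hs => Set.subset_sUnion_of_mem hs⟩
    · rintro a ⟨G, hGc, haG⟩ b hab; exact ⟨G, hGc, (hc hGc).1.1 a haG b hab⟩
    · rintro a ⟨G₁, hG₁, ha⟩ b ⟨G₂, hG₂, hb⟩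
      rcases hch.total hG₁ hG₂ with hle | hle
      · exact ⟨G₂, hG₂, (hc hG₂).1.2 a (hle ha) b hb⟩
      · exact ⟨G₁, hG₁, (hc hG₁).1.2 a ha b (hle hb)⟩
    · exact (hc hG₀).2.1.trans (Set.subset_sUnion_of_mem hG₀)
    · rintro a ⟨G, hGc, haG⟩; exact (hc hGc).2.2 a haG
  obtain ⟨G, hF₀G, hGmax⟩ := zorn_subset_nonempty 𝒢 hchain F₀ ⟨hF₀fil, le_rfl, hF₀Tid⟩
  obtain ⟨⟨Gup, Gmeet⟩, GF₀, Gdisj⟩ := hGmax.1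
  have Gtop : ⊤ ∈ G := GF₀ ⟨∅, by simp, by simp⟩
  have GfinInf : ∀ G₀ : Finset L, ↑G₀ ⊆ G → G₀.inf id ∈ G := by
    intro G₀
    induction G₀ using Finset.induction_on with
    | empty => intro _; simpa using Gtop
    | @insert a s ha ih =>
      intro hsub
      rw [Finset.inf_insert]
      exact Gmeet a (hsub (by simp)) _ (ih fun b hb => hsub (by simp [hb]))
  set x := sInf (e '' G) with hx
  have hxea : ∀ a ∈ G, x ≤ e a := fun a ha => sInf_le ⟨a, ha, rfl⟩
  have hxp : x ≤ p := le_sInf (by rintro q ⟨a, haS, rfl⟩; exact hxea a (GF₀ (hSF₀ haS)))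
  have hxv : ¬ x ≤ v := by
    intro hxv
    obtain ⟨G₀, T₀, hG₀, hT₀, hle⟩ := hcomp G T hxv
    exact Gdisj _ (GfinInf G₀ hG₀) ⟨T₀, hT₀, hle⟩
  refine ⟨x, ?_, hxp, fun hxw => hxv (hxw.trans hwT)⟩
  intro SS hSS
  by_contra hxSS
  apply hxv
  have key : ∀ s ∈ SS, s ≤ v := by
    intro s hs
    have hsx : s ≤ x := hSS ▸ le_sSup hs
    have hsd := (hdense s).1
    rw [hsd]
    apply sSup_le
    rintro q ⟨S', rfl, hqs⟩
    have hqx : sInf (e '' S') ≤ x := hqs.trans hsx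
    by_cases hGG : ∀ c : L, sInf (e '' S') ≤ e c → c ∈ G
    · have hxq : x ≤ sInf (e '' S') := by
        apply le_sInf; rintro q' ⟨a, haS', rfl⟩
        exact hxea a (hGG a (sInf_le ⟨a, haS', rfl⟩))
      have hse : s = x := le_antisymm hsx (hxq.trans hqs)
      exact absurd (hse ▸ hs) hxSS
    · push_neg at hGG
      obtain ⟨c, hqc, hcG⟩ := hGG
      have : ∃ g ∈ G, ∃ a ∈ Tid, g ⊓ c ≤ a := by
        by_contra hno
        push_neg at hno
        have hG' : {b : L | ∃ g ∈ G, g ⊓ c ≤ b} ∈ 𝒢 := by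
          refine ⟨⟨?_, ?_⟩, ?_, ?_⟩
          · rintro a ⟨g, hg, hga⟩ b hab; exact ⟨g, hg, hga.trans hab⟩
          · rintro a ⟨g₁, hg₁, h₁⟩ b ⟨g₂, hg₂, h₂⟩
            exact ⟨g₁ ⊓ g₂, Gmeet g₁ hg₁ g₂ hg₂, le_inf
              ((inf_le_inf_right c inf_le_left).trans h₁)
              ((inf_le_inf_right c inf_le_right).trans h₂)⟩
          · exact fun a ha => ⟨a, GF₀ ha, inf_le_left⟩
          · rintro a ⟨g, hg, hga⟩ haTid
            exact hno g hg a haTid hga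
        have hsub : G ⊆ {b : L | ∃ g ∈ G, g ⊓ c ≤ b} := fun a ha => ⟨a, ha, inf_le_left⟩
        exact hcG (hGmax.2 hG' hsub ⟨⊤, Gtop, by simp⟩)
      obtain ⟨g, hg, a, haTid, hle⟩ := this
      calc sInf (e '' S') ≤ e g ⊓ e c := le_inf (hqx.trans (hxea g hg)) hqc
        _ = e (g ⊓ c) := (hmeet g c).symm
        _ ≤ e a := ce_mono h hle
        _ ≤ v := hTv a haTid
  calc x = sSup SS := hSS
    _ ≤ v := sSup_le key

lemma ce_join_dense (h : IsCanonicalExtension e) (u : C) :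
    u = sSup {x : C | CompletelyJoinIrreducible x ∧ x ≤ u} := by
  refine le_antisymm ?_ (sSup_le fun x hx => hx.2)
  by_contra hu
  set u' := sSup {x : C | CompletelyJoinIrreducible x ∧ x ≤ u} with hu'
  have : ∃ S : Set L, sInf (e '' S) ≤ u ∧ ¬ sInf (e '' S) ≤ u' := by
    by_contra hc; push_neg at hc
    apply hu
    calc u = sSup {v : C | ∃ S : Set L, v = sInf (e '' S) ∧ v ≤ u} :=
          (h.2.2.2.2.2.1 u).1
      _ ≤ u' := sSup_le (by rintro v ⟨S, rfl, hvu⟩; exact hc S hvu)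
  obtain ⟨S, hSu, hSu'⟩ := this
  obtain ⟨x, hxj, hxS, hxu'⟩ := cji_exists h S u' hSu'
  exact hxu' (le_sSup ⟨hxj, hxS.trans hSu⟩)

lemma hat_sSup (h : IsCanonicalExtension e) (a : L) :
    sSup (hatSet e a) = e a := (ce_join_dense h (e a)).symm

lemma ce_dual (h : IsCanonicalExtension e) :
    IsCanonicalExtension (fun a : Lᵒᵈ => OrderDual.toDual (e (OrderDual.ofDual a))) := by
  obtain ⟨hinj, hmeet, hjoin, hbot, htop, hdense, hcomp⟩ := h
  refine ⟨fun a b hab => hinj hab, fun a b => hjoin _ _, fun a b => hmeet _ _,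
    htop, hbot, fun u => ⟨(hdense u).2, (hdense u).1⟩, fun S T hST => ?_⟩
  obtain ⟨T', S', hT', hS', hle⟩ := hcomp T S hST
  exact ⟨S', T', hS', hT', hle⟩

lemma check_sInf (h : IsCanonicalExtension e) (a : L) :
    sInf (checkSet e a) = e a :=
  hat_sSup (ce_dual h) (OrderDual.toDual a)

lemma uMap_hat (h : IsCanonicalExtension e) (T : Finset L) :
    uMap (⋃ a ∈ T, hatSet e a) = checkSet e (T.sup id) := by
  ext y
  constructor
  · rintro ⟨hyM, hy⟩
    refine ⟨hyM, ?_⟩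
    rw [ce_finsetSup h]
    apply Finset.sup_le
    intro a ha
    rw [← hat_sSup h a]
    exact sSup_le fun x hx => hy x (Set.mem_biUnion ha hx)
  · rintro ⟨hyM, hy⟩
    refine ⟨hyM, fun x hx => ?_⟩
    simp only [Set.mem_iUnion] at hx
    obtain ⟨a, ha, hxa⟩ := hx
    exact hxa.2.trans ((ce_mono h (Finset.le_sup (f := id) ha)).trans hy)

lemma lMap_check (h : IsCanonicalExtension e) (T : Finset L) :
    lMap (⋃ a ∈ T, checkSet e a) = hatSet e (T.inf id) := by
  ext x
  constructor
  · rintro ⟨hxJ, hx⟩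
    refine ⟨hxJ, ?_⟩
    rw [ce_finsetInf h]
    apply Finset.le_inf
    intro a ha
    rw [← check_sInf h a]
    exact le_sInf fun y hy => hx y (Set.mem_biUnion ha hy)
  · rintro ⟨hxJ, hx⟩
    refine ⟨hxJ, fun y hy => ?_⟩
    simp only [Set.mem_iUnion] at hy
    obtain ⟨a, ha, hya⟩ := hy
    exact (hx.trans (ce_mono h (Finset.inf_le (f := id) ha))).trans hya.2

lemma lMap_check_single (h : IsCanonicalExtension e) (a : L) :
    lMap (checkSet e a) = hatSet e a := by
  have h2 : checkSet e a = ⋃ b ∈ ({a} : Finset L), checkSet e b := by simp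
  rw [h2, lMap_check h]
  simp

lemma hat_subset_iff (h : IsCanonicalExtension e) {a b : L} :
    hatSet e a ⊆ hatSet e b ↔ a ≤ b := by
  constructor
  · intro hab
    rw [← ce_le_iff h (a := a) (b := b), ← hat_sSup h a, ← hat_sSup h b]
    exact sSup_le_sSup hab
  · intro hab x hx
    exact ⟨hx.1, hx.2.trans (ce_mono h hab)⟩

end CanonicalExtensionAux

/-- The Galois connection between the distributive envelopes induced by a canonical
extension, whose lattice of Galois-closed sets is isomorphic to `L`. -/
theorem galoisConnection_distributiveEnvelopes {L C : Type*} [Lattice L] [BoundedOrder L]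
    [CompleteLattice C] (e : L → C) (h : IsCanonicalExtension e) :
    -- (1) `u` maps `D^∧` into `D^∨` via `u(⋃_{a ∈ T} â) = (⋁ T)ˇ`, and dually for `l`
    (∀ T : Finset L, uMap (⋃ a ∈ T, hatSet e a) = checkSet e (T.sup id)) ∧
    (∀ V : Set C, (∃ T : Finset L, V = ⋃ a ∈ T, hatSet e a) →
      ∃ U : Finset L, uMap V = ⋃ a ∈ U, checkSet e a) ∧
    (∀ W : Set C, (∃ T : Finset L, W = ⋃ a ∈ T, checkSet e a) →
      ∃ U : Finset L, lMap W = ⋃ a ∈ U, hatSet e a) ∧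
    -- (2) Galois connection
    (∀ V W : Set C, (∃ T : Finset L, V = ⋃ a ∈ T, hatSet e a) →
      (∃ T : Finset L, W = ⋃ a ∈ T, checkSet e a) →
      (W ⊆ uMap V ↔ V ⊆ lMap W)) ∧
    -- (3) the Galois-closed elements of `D^∧`, ordered by inclusion, form a lattice
    -- isomorphic to `L`, via `a ↦ â`
    ∃ φ : L ≃o {V : Set C //
        (∃ T : Finset L, V = ⋃ a ∈ T, hatSet e a) ∧ lMap (uMap V) = V},
      ∀ a : L, (φ a : Set C) = hatSet e a := by
  classical
  refine ⟨uMap_hat h, ?_, ?_, ?_, ?_⟩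
  · rintro V ⟨T, rfl⟩
    exact ⟨{T.sup id}, by rw [uMap_hat h]; simp⟩
  · rintro W ⟨T, rfl⟩
    exact ⟨{T.inf id}, by rw [lMap_check h]; simp⟩
  · rintro V W ⟨T, rfl⟩ ⟨U, rfl⟩
    constructor
    · intro hWu x hxV
      have hxJ : CompletelyJoinIrreducible x := by
        simp only [Set.mem_iUnion] at hxV
        obtain ⟨a, _, hx⟩ := hxV; exact hx.1
      exact ⟨hxJ, fun y hyW => (hWu hyW).2 x hxV⟩
    · intro hVl y hyW
      have hyM : CompletelyMeetIrreducible y := by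
        simp only [Set.mem_iUnion] at hyW
        obtain ⟨a, _, hy⟩ := hyW; exact hy.1
      exact ⟨hyM, fun x hxV => (hVl hxV).2 y hyW⟩
  · have hcl : ∀ a : L, lMap (uMap (hatSet e a)) = hatSet e a := by
      intro a
      have h1 : hatSet e a = ⋃ b ∈ ({a} : Finset L), hatSet e b := by simp
      rw [h1, uMap_hat h]
      have h3 : Finset.sup ({a} : Finset L) id = a := by simp
      rw [h3, lMap_check_single h]
      exact h1
    let femb : L ↪o {V : Set C //
        (∃ T : Finset L, V = ⋃ a ∈ T, hatSet e a) ∧ lMap (uMap V) = V} :=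
      OrderEmbedding.ofMapLEIff
        (fun a => ⟨hatSet e a, ⟨{a}, by simp⟩, hcl a⟩)
        (fun a b => hat_subset_iff h)
    have hsurj : Function.Surjective femb := by
      rintro ⟨V, ⟨T, rfl⟩, hclV⟩
      refine ⟨T.sup id, Subtype.ext ?_⟩
      show hatSet e (T.sup id) = ⋃ a ∈ T, hatSet e a
      have h4 : lMap (uMap (⋃ a ∈ T, hatSet e a)) = hatSet e (T.sup id) := by
        rw [uMap_hat h, lMap_check_single h]
      rw [← hclV, h4]
    exact ⟨RelIso.ofSurjective femb hsurj, fun a => rfl⟩
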